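/- Let Ω be a q-closed sesquilinear form on D with respect to ‖·‖_Ω, E = D[‖·‖_Ω], and Υ a bounded sesquilinear form on H whose negative has numerical range disjoint from that of Ω (i.e., {Ω(ξ,ξ) : ‖ξ‖=1} ∩ {-Υ(ξ,ξ) : ‖ξ‖=1} = ∅). Then Υ ∈ P₀(Ω) if and only if there exists a constant c > 0 such that c‖ξ‖_Ω ≤ sup{|(Ω+Υ)(ξ,η)| : η ∈ D, ‖η‖_Ω = 1} for all ξ ∈ D. -/

import Mathlib

noncomputable section

open Filter Topology Function
open scoped InnerProductSpace

namespace Paper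

variable {V : Type} [AddCommGroup V] [Module ℂ V]

/-- `n` is a norm on the complex vector space `V`. -/
def IsNormFn (n : V → ℝ) : Prop :=
  (∀ x : V, n x = 0 ↔ x = 0) ∧
    (∀ (c : ℂ) (x : V), n (c • x) = ‖c‖ * n x) ∧
      ∀ x y : V, n (x + y) ≤ n x + n y

/-- `ξ` is a Cauchy sequence with respect to the norm `n`. -/
def IsCauchyWrt (n : V → ℝ) (ξ : ℕ → V) : Prop :=
  ∀ ε : ℝ, 0 < ε → ∃ N : ℕ, ∀ p q : ℕ, N ≤ p → N ≤ q → n (ξ p - ξ q) < ε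

/-- `ξ` tends to `x` with respect to the norm `n`. -/
def TendstoWrt (n : V → ℝ) (ξ : ℕ → V) (x : V) : Prop :=
  Tendsto (fun k => n (ξ k - x)) atTop (𝓝 0)

/-- `V` is complete with respect to the norm `n`. -/
def CompleteWrt (n : V → ℝ) : Prop :=
  ∀ ξ : ℕ → V, IsCauchyWrt n ξ → ∃ x : V, TendstoWrt n ξ x

/-- The two norms `n₁` and `n₂` are equivalent. -/
def EquivNorms (n₁ n₂ : V → ℝ) : Prop :=
  ∃ c₁ : ℝ, 0 < c₁ ∧ ∃ c₂ : ℝ, 0 < c₂ ∧ ∀ x : V, n₁ x ≤ c₁ * n₂ x ∧ n₂ x ≤ c₂ * n₁ x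

/-- `Ω` is a sesquilinear form: linear in the first entry, conjugate-linear in the second. -/
def IsSesq (Ω : V → V → ℂ) : Prop :=
  (∀ η : V, IsLinearMap ℂ fun ξ => Ω ξ η) ∧
    ∀ ξ : V, IsLinearMap ℂ fun η => (starRingEnd ℂ) (Ω ξ η)

/-- `T` is a positive form: `T(ξ,ξ) ≥ 0` for every `ξ`. -/
def IsPositiveForm (T : V → V → ℂ) : Prop :=
  ∀ x : V, (T x x).im = 0 ∧ 0 ≤ (T x x).re

/-- The norm `n` is compatible with the positive sesquilinear form `T`. -/
def CompatibleWithForm (T : V → V → ℂ) (n : V → ℝ) : Prop :=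
  (∃ α : ℝ, 0 < α ∧ ∀ ξ : V, (T ξ ξ).re ≤ α * n ξ ^ 2) ∧
    ∀ ξ : ℕ → V, Tendsto (fun k => (T (ξ k) (ξ k)).re) atTop (𝓝 0) →
      IsCauchyWrt n ξ → Tendsto (fun k => n (ξ k)) atTop (𝓝 0)

/-- A realization of `(V, n)` as a dense subspace of a reflexive Banach space `E`. -/
structure BanachModel (V : Type) [AddCommGroup V] [Module ℂ V] (n : V → ℝ) : Type 1 where
  E : Type
  [instGroup : NormedAddCommGroup E]
  [instSpace : NormedSpace ℂ E]
  [instComplete : CompleteSpace E]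
  j : V →ₗ[ℂ] E
  isometry : ∀ x : V, ‖j x‖ = n x
  dense : DenseRange j
  reflexive : Surjective (NormedSpace.inclusionInDoubleDual ℂ E)

/-- `V` endowed with the norm `n` is a reflexive Banach space. -/
def IsReflexiveBanachWrt (n : V → ℝ) : Prop :=
  ∃ M : BanachModel V n, Surjective M.j

/-- The completion of `V` with respect to the norm `n` is a reflexive Banach space. -/
def CompletionIsReflexiveBanach (n : V → ℝ) : Prop :=
  Nonempty (BanachModel V n)

variable {H : Type} [NormedAddCommGroup H] [InnerProductSpace ℂ H]

/-- The embedding of `D[n]` into `H` is continuous. -/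
def EmbedsContinuously (D : Submodule ℂ H) (n : D → ℝ) : Prop :=
  ∃ α : ℝ, 0 < α ∧ ∀ ξ : D, ‖(ξ : H)‖ ≤ α * n ξ

/-- The norm `n` on `D` is compatible with the inner product of `H`. -/
def CompatibleWithInner (D : Submodule ℂ H) (n : D → ℝ) : Prop :=
  EmbedsContinuously D n ∧
    ∀ ξ : ℕ → D, Tendsto (fun k => ‖(ξ k : H)‖) atTop (𝓝 0) →
      IsCauchyWrt n ξ → Tendsto (fun k => n (ξ k)) atTop (𝓝 0)

/-- The form `Ω` is bounded on `D[n]`. -/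
def BoundedOn (D : Submodule ℂ H) (Ω : D → D → ℂ) (n : D → ℝ) : Prop :=
  ∃ β : ℝ, 0 < β ∧ ∀ ξ η : D, ‖Ω ξ η‖ ≤ β * n ξ * n η

/-- `Ω` is q-closed with respect to the norm `n` (Definition 5.2 of Di Bella–Trapani). -/
def IsQClosed (D : Submodule ℂ H) (Ω : D → D → ℂ) (n : D → ℝ) : Prop :=
  IsNormFn n ∧ CompatibleWithInner D n ∧ IsReflexiveBanachWrt n ∧ BoundedOn D Ω n

/-- `Ω` is q-closable with respect to the norm `n`. -/
def IsQClosable (D : Submodule ℂ H) (Ω : D → D → ℂ) (n : D → ℝ) : Prop :=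
  IsNormFn n ∧ CompatibleWithInner D n ∧ CompletionIsReflexiveBanach n ∧ BoundedOn D Ω n

/-- `Λ` is a bounded conjugate-linear functional on `D[n]`,
i.e. an element of the conjugate dual of `D[n]`. -/
def MemConjDual (D : Submodule ℂ H) (n : D → ℝ) (Λ : D → ℂ) : Prop :=
  (∀ x y : D, Λ (x + y) = Λ x + Λ y) ∧
    (∀ (c : ℂ) (x : D), Λ (c • x) = (starRingEnd ℂ) c * Λ x) ∧
      ∃ C : ℝ, ∀ x : D, ‖Λ x‖ ≤ C * n x

/-- `Υ` is a bounded sesquilinear form on `H`. -/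
def IsBoundedForm (Υ : H → H → ℂ) : Prop :=
  IsSesq Υ ∧ ∃ C : ℝ, ∀ x y : H, ‖Υ x y‖ ≤ C * ‖x‖ * ‖y‖

/-- `Υ ∈ P₀(Ω)`: `N(Ω+Υ) = {0}` and every element of the conjugate dual of `D[n]`
is represented by `Ω+Υ`. -/
def InP0 (D : Submodule ℂ H) (Ω : D → D → ℂ) (n : D → ℝ) (Υ : H → H → ℂ) : Prop :=
  (∀ ξ : D, (∀ η : D, Ω ξ η + Υ ↑ξ ↑η = 0) → ξ = 0) ∧
    ∀ Λ : D → ℂ, MemConjDual D n Λ → ∃ ξ : D, ∀ η : D, Λ η = Ω ξ η + Υ ↑ξ ↑η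

/-- `Ω` is solvable with respect to the norm `n`. -/
def IsSolvable (D : Submodule ℂ H) (Ω : D → D → ℂ) (n : D → ℝ) : Prop :=
  IsQClosed D Ω n ∧ ∃ Υ : H → H → ℂ, IsBoundedForm Υ ∧ InP0 D Ω n Υ

/-- The numerical range of a form on `D`. -/
def NumRangeForm (D : Submodule ℂ H) (Ω : D → D → ℂ) : Set ℂ :=
  {z : ℂ | ∃ ξ : D, ‖(ξ : H)‖ = 1 ∧ z = Ω ξ ξ}

/-- The numerical range of a form on `H`. -/
def NumRangeFormH (Υ : H → H → ℂ) : Set ℂ :=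
  {z : ℂ | ∃ x : H, ‖x‖ = 1 ∧ z = Υ x x}

/-- `sup { |Θ(ξ,η)| : ‖η‖_Ω = 1 }`. -/
def FormSup (D : Submodule ℂ H) (Θ : D → D → ℂ) (n : D → ℝ) (ξ : D) : ℝ :=
  sSup {r : ℝ | ∃ η : D, n η = 1 ∧ r = ‖Θ ξ η‖}

end Paper

namespace Paper

private lemma aux_eq_top_of_dual {F : Type*} [NormedAddCommGroup F] [NormedSpace ℂ F]
    (p : Submodule ℂ F) (hc : IsClosed (p : Set F))
    (h : ∀ g : F →L[ℂ] ℂ, (∀ x ∈ p, g x = 0) → g = 0) : p = ⊤ := by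
  by_contra hp
  rw [Submodule.eq_top_iff'] at hp
  push_neg at hp
  obtain ⟨x, hx⟩ := hp
  letI : NormedAddCommGroup (F ⧸ p) := @Submodule.Quotient.normedAddCommGroup _ _ _ _ _ p hc
  have hxq : (Submodule.Quotient.mk x : F ⧸ p) ≠ 0 := by
    simpa [Submodule.Quotient.mk_eq_zero] using hx
  obtain ⟨g, hg1, hgx⟩ := exists_dual_vector ℂ _ (norm_ne_zero_iff.mpr hxq)
  have hmkQc : Continuous (p.mkQ) := by
    apply AddMonoidHomClass.continuous_of_bound (p.mkQ) 1
    intro y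
    simpa using Submodule.Quotient.norm_mk_le p y
  let mkQc : F →L[ℂ] F ⧸ p := ⟨p.mkQ, hmkQc⟩
  have := h (g.comp mkQc) ?_
  · apply hxq
    have h2 : g.comp mkQc x = 0 := by rw [this]; rfl
    have h3 : g (Submodule.Quotient.mk x) = 0 := h2
    rw [h3] at hgx
    rw [← norm_eq_zero]
    have : (‖(Submodule.Quotient.mk x : F ⧸ p)‖ : ℂ) = 0 := hgx.symm
    exact_mod_cast this
  · intro y hy
    have : mkQc y = 0 := by
      simpa [mkQc, Submodule.Quotient.mk_eq_zero] using hy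
    simp [ContinuousLinearMap.comp_apply, this]

set_option maxHeartbeats 2000000 in
theorem inP0_iff_lower_bound_of_disjoint_numrange {H : Type} [NormedAddCommGroup H]
    [InnerProductSpace ℂ H] [CompleteSpace H]
    (D : Submodule ℂ H) (hD : Dense (D : Set H)) (Ω : ↥D → ↥D → ℂ) (hsesq : IsSesq Ω)
    (n : ↥D → ℝ) (hq : IsQClosed D Ω n)
    (Υ : H → H → ℂ) (hΥ : IsBoundedForm Υ)
    (hdisj : NumRangeForm D Ω ∩ NumRangeFormH (fun x y => -Υ x y) = ∅) :
    InP0 D Ω n Υ ↔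
      ∃ c : ℝ, 0 < c ∧ ∀ ξ : ↥D,
        c * n ξ ≤ FormSup D (fun a b => Ω a b + Υ ↑a ↑b) n ξ := by
  classical
  haveI : RingHomSurjective (starRingEnd ℂ) := ⟨fun x => ⟨(starRingEnd ℂ) x, by simp⟩⟩
  obtain ⟨hn, hcomp, hrefl, hbdd⟩ := hq
  obtain ⟨hΥs, CΥ, hΥb⟩ := hΥ
  set Θ : ↥D → ↥D → ℂ := fun a b => Ω a b + Υ ↑a ↑b with hΘdef
  -- basic norm facts
  have hnn : ∀ x : ↥D, 0 ≤ n x := by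
    intro x
    have h1 : n (x + (-1 : ℂ) • x) = 0 := by
      have : x + (-1 : ℂ) • x = 0 := by
        simp [neg_one_smul]
      rw [this]
      exact (hn.1 0).2 rfl
    have h2 := hn.2.2 x ((-1 : ℂ) • x)
    have h3 : n ((-1 : ℂ) • x) = n x := by
      rw [hn.2.1]; simp
    rw [h1, h3] at h2
    linarith
  -- sesquilinearity helpers
  have hΩsmulL : ∀ (c : ℂ) (ξ η : ↥D), Ω (c • ξ) η = c * Ω ξ η := fun c ξ η =>
    (hsesq.1 η).map_smul c ξ
  have hΩaddL : ∀ (ξ₁ ξ₂ η : ↥D), Ω (ξ₁ + ξ₂) η = Ω ξ₁ η + Ω ξ₂ η := fun ξ₁ ξ₂ η =>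
    (hsesq.1 η).map_add ξ₁ ξ₂
  have hΩsmulR : ∀ (c : ℂ) (ξ η : ↥D), Ω ξ (c • η) = (starRingEnd ℂ) c * Ω ξ η := by
    intro c ξ η
    have h := (hsesq.2 ξ).map_smul c η
    have h2 := congrArg (starRingEnd ℂ) h
    simpa [mul_comm] using h2
  have hΩaddR : ∀ (ξ η₁ η₂ : ↥D), Ω ξ (η₁ + η₂) = Ω ξ η₁ + Ω ξ η₂ := by
    intro ξ η₁ η₂
    have h := (hsesq.2 ξ).map_add η₁ η₂
    have h2 := congrArg (starRingEnd ℂ) h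
    simpa using h2
  have hΥsmulL : ∀ (c : ℂ) (x y : H), Υ (c • x) y = c * Υ x y := fun c x y =>
    (hΥs.1 y).map_smul c x
  have hΥaddL : ∀ (x₁ x₂ y : H), Υ (x₁ + x₂) y = Υ x₁ y + Υ x₂ y := fun x₁ x₂ y =>
    (hΥs.1 y).map_add x₁ x₂
  have hΥsmulR : ∀ (c : ℂ) (x y : H), Υ x (c • y) = (starRingEnd ℂ) c * Υ x y := by
    intro c x y
    have h := (hΥs.2 x).map_smul c y
    have h2 := congrArg (starRingEnd ℂ) h
    simpa [mul_comm] using h2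
  have hΥaddR : ∀ (x y₁ y₂ : H), Υ x (y₁ + y₂) = Υ x y₁ + Υ x y₂ := by
    intro x y₁ y₂
    have h := (hΥs.2 x).map_add y₁ y₂
    have h2 := congrArg (starRingEnd ℂ) h
    simpa using h2
  have hΘsmulL : ∀ (c : ℂ) (ξ η : ↥D), Θ (c • ξ) η = c * Θ ξ η := by
    intro c ξ η
    simp only [Θ, Submodule.coe_smul, hΩsmulL, hΥsmulL, mul_add]
  have hΘaddL : ∀ (ξ₁ ξ₂ η : ↥D), Θ (ξ₁ + ξ₂) η = Θ ξ₁ η + Θ ξ₂ η := by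
    intro ξ₁ ξ₂ η
    simp only [Θ, Submodule.coe_add, hΩaddL, hΥaddL]
    ring
  have hΘsmulR : ∀ (c : ℂ) (ξ η : ↥D), Θ ξ (c • η) = (starRingEnd ℂ) c * Θ ξ η := by
    intro c ξ η
    simp only [Θ, Submodule.coe_smul, hΩsmulR, hΥsmulR, mul_add]
  have hΘaddR : ∀ (ξ η₁ η₂ : ↥D), Θ ξ (η₁ + η₂) = Θ ξ η₁ + Θ ξ η₂ := by
    intro ξ η₁ η₂
    simp only [Θ, Submodule.coe_add, hΩaddR, hΥaddR]
    ring
  have hΘzeroR : ∀ ξ : ↥D, Θ ξ 0 = 0 := by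
    intro ξ
    have := hΘsmulR 0 ξ 0
    simpa using this
  have hΘzeroL : ∀ η : ↥D, Θ 0 η = 0 := by
    intro η
    have := hΘsmulL 0 0 η
    simpa using this
  -- nondegeneracy from disjoint numerical ranges
  have hnd : ∀ ξ : ↥D, Θ ξ ξ = 0 → ξ = 0 := by
    intro ξ h0
    by_contra hne
    have hξH : (ξ : H) ≠ 0 := fun hh => hne (Subtype.ext hh)
    have hr : (0 : ℝ) < ‖(ξ : H)‖ := norm_pos_iff.mpr hξH
    set r : ℝ := ‖(ξ : H)‖⁻¹ with hrdef
    have hrpos : 0 < r := inv_pos.mpr hr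
    set ξ' : ↥D := (r : ℂ) • ξ with hξ'def
    have hcoe : ((ξ' : H)) = (r : ℂ) • (ξ : H) := rfl
    have hnorm1 : ‖(ξ' : H)‖ = 1 := by
      rw [hcoe, norm_smul]
      simp [hrdef, Complex.norm_real, abs_of_pos hrpos, inv_mul_cancel₀ hr.ne']
    have hconjr : (starRingEnd ℂ) (r : ℂ) = (r : ℂ) := Complex.conj_ofReal r
    have hΩscale : Ω ξ' ξ' = (r : ℂ) * (r : ℂ) * Ω ξ ξ := by
      rw [hξ'def, hΩsmulL, hΩsmulR, hconjr]; ring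
    have hΥscale : Υ (ξ' : H) (ξ' : H) = (r : ℂ) * (r : ℂ) * Υ (ξ : H) (ξ : H) := by
      rw [hcoe, hΥsmulL, hΥsmulR, hconjr]; ring
    have hΩΥ : Ω ξ ξ = -Υ (ξ : H) (ξ : H) := by
      have : Ω ξ ξ + Υ (ξ : H) (ξ : H) = 0 := h0
      linear_combination this
    have hmem1 : Ω ξ' ξ' ∈ NumRangeForm D Ω := ⟨ξ', hnorm1, rfl⟩
    have hmem2 : Ω ξ' ξ' ∈ NumRangeFormH (fun x y => -Υ x y) := by
      refine ⟨(ξ' : H), hnorm1, ?_⟩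
      show Ω ξ' ξ' = -Υ (ξ' : H) (ξ' : H)
      rw [hΩscale, hΥscale, hΩΥ]
      ring
    have : Ω ξ' ξ' ∈ NumRangeForm D Ω ∩ NumRangeFormH (fun x y => -Υ x y) := ⟨hmem1, hmem2⟩
    rw [hdisj] at this
    exact this
  -- the Banach model
  obtain ⟨M, hMsurj⟩ := hrefl
  letI : NormedAddCommGroup M.E := M.instGroup
  letI : NormedSpace ℂ M.E := M.instSpace
  letI : CompleteSpace M.E := M.instComplete
  have hMinj : Function.Injective M.j := by
    intro a b hab
    have h1 : n (a - b) = 0 := by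
      rw [← M.isometry, map_sub, hab, sub_self, norm_zero]
    exact sub_eq_zero.mp ((hn.1 (a - b)).1 h1)
  let e : ↥D ≃ₗ[ℂ] M.E := LinearEquiv.ofBijective M.j ⟨hMinj, hMsurj⟩
  have he : ∀ x : ↥D, ‖e x‖ = n x := fun x => M.isometry x
  have he' : ∀ u : M.E, n (e.symm u) = ‖u‖ := fun u => by
    rw [← he (e.symm u), e.apply_symm_apply]
  -- global bound for Θ in the norm n
  obtain ⟨α, hα, hemb⟩ := hcomp.1
  obtain ⟨β, hβ, hΩb⟩ := hbdd
  set B : ℝ := β + max CΥ 0 * α * α with hBdef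
  have hB : 0 < B := by
    have : (0:ℝ) ≤ max CΥ 0 * α * α := by positivity
    linarith
  have hΘb : ∀ ξ η : ↥D, ‖Θ ξ η‖ ≤ B * n ξ * n η := by
    intro ξ η
    have h1 := hΩb ξ η
    have h2 := hΥb (↑ξ) (↑η)
    have h3 : ‖(ξ : H)‖ ≤ α * n ξ := hemb ξ
    have h4 : ‖(η : H)‖ ≤ α * n η := hemb η
    have h5 : ‖Θ ξ η‖ ≤ ‖Ω ξ η‖ + ‖Υ ↑ξ ↑η‖ := norm_add_le _ _
    have h6 : CΥ * ‖(ξ:H)‖ * ‖(η:H)‖ ≤ max CΥ 0 * ‖(ξ:H)‖ * ‖(η:H)‖ :=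
      mul_le_mul_of_nonneg_right
        (mul_le_mul_of_nonneg_right (le_max_left CΥ 0) (norm_nonneg _)) (norm_nonneg _)
    have h7 : max CΥ 0 * ‖(ξ:H)‖ * ‖(η:H)‖ ≤ max CΥ 0 * (α * n ξ) * (α * n η) := by
      have hm : (0:ℝ) ≤ max CΥ 0 := le_max_right _ _
      exact mul_le_mul (mul_le_mul_of_nonneg_left (hemb ξ) hm) (hemb η) (norm_nonneg _)
        (mul_nonneg hm (mul_nonneg hα.le (hnn ξ)))
    have hgoal : β * n ξ * n η + max CΥ 0 * (α * n ξ) * (α * n η) = B * n ξ * n η := by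
      rw [hBdef]; ring
    linarith
  -- the conjugate-dual operator A
  let Tl : ↥D → (M.E →L[ℂ] ℂ) := fun ξ =>
    LinearMap.mkContinuous
      { toFun := fun v => (starRingEnd ℂ) (Θ ξ (e.symm v))
        map_add' := fun v w => by
          show (starRingEnd ℂ) (Θ ξ (e.symm (v + w))) =
            (starRingEnd ℂ) (Θ ξ (e.symm v)) + (starRingEnd ℂ) (Θ ξ (e.symm w))
          rw [map_add e.symm v w, hΘaddR, map_add]
        map_smul' := fun c v => by
          show (starRingEnd ℂ) (Θ ξ (e.symm (c • v))) =
            (RingHom.id ℂ) c • (starRingEnd ℂ) (Θ ξ (e.symm v))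
          rw [map_smul, hΘsmulR, map_mul, Complex.conj_conj]
          simp }
      (B * n ξ)
      (fun v => by
        show ‖(starRingEnd ℂ) (Θ ξ (e.symm v))‖ ≤ (B * n ξ) * ‖v‖
        rw [RCLike.norm_conj]
        calc ‖Θ ξ (e.symm v)‖ ≤ B * n ξ * n (e.symm v) := hΘb _ _
          _ = B * n ξ * ‖v‖ := by rw [he'])
  have hTl : ∀ (ξ : ↥D) (v : M.E), Tl ξ v = (starRingEnd ℂ) (Θ ξ (e.symm v)) := fun ξ v => rfl
  have hTlnorm : ∀ ξ : ↥D, ‖Tl ξ‖ ≤ B * n ξ := by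
    intro ξ
    apply ContinuousLinearMap.opNorm_le_bound _ (mul_nonneg hB.le (hnn ξ))
    intro v
    rw [hTl, RCLike.norm_conj]
    calc ‖Θ ξ (e.symm v)‖ ≤ B * n ξ * n (e.symm v) := hΘb _ _
      _ = B * n ξ * ‖v‖ := by rw [he']
  let A : M.E →SL[starRingEnd ℂ] (M.E →L[ℂ] ℂ) :=
    LinearMap.mkContinuous
      { toFun := fun u => Tl (e.symm u)
        map_add' := fun u v => by
          ext w
          show Tl (e.symm (u + v)) w = (Tl (e.symm u) + Tl (e.symm v)) w
          rw [ContinuousLinearMap.add_apply, hTl, hTl, hTl, map_add e.symm u v, hΘaddL, map_add]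
        map_smul' := fun c u => by
          ext w
          show Tl (e.symm (c • u)) w = ((starRingEnd ℂ) c • Tl (e.symm u)) w
          rw [ContinuousLinearMap.smul_apply, hTl, hTl, map_smul e.symm c u, hΘsmulL, map_mul,
            smul_eq_mul] }
      B
      (fun u => by
        show ‖Tl (e.symm u)‖ ≤ B * ‖u‖
        rw [← he' u]
        exact hTlnorm _)
  have hA : ∀ (u : M.E) (v : M.E), A u v = (starRingEnd ℂ) (Θ (e.symm u) (e.symm v)) :=
    fun u v => rfl
  have hAe : ∀ ξ η : ↥D, A (e ξ) (e η) = (starRingEnd ℂ) (Θ ξ η) := by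
    intro ξ η
    rw [hA, e.symm_apply_apply, e.symm_apply_apply]
  -- FormSup facts
  have hbdda : ∀ ξ : ↥D, BddAbove {r : ℝ | ∃ η : ↥D, n η = 1 ∧ r = ‖Θ ξ η‖} := by
    intro ξ
    refine ⟨B * n ξ, ?_⟩
    rintro r ⟨η, hη, rfl⟩
    have := hΘb ξ η
    rw [hη, mul_one] at this
    exact this
  have hsup_le_A : ∀ ξ : ↥D, FormSup D Θ n ξ ≤ ‖A (e ξ)‖ := by
    intro ξ
    apply Real.sSup_le
    · rintro r ⟨η, hη, rfl⟩
      have h1 : ‖Θ ξ η‖ = ‖A (e ξ) (e η)‖ := by rw [hAe, RCLike.norm_conj]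
      rw [h1]
      calc ‖A (e ξ) (e η)‖ ≤ ‖A (e ξ)‖ * ‖e η‖ := (A (e ξ)).le_opNorm _
        _ = ‖A (e ξ)‖ := by rw [he, hη, mul_one]
    · exact norm_nonneg _
  by_cases htriv : ∀ ξ : ↥D, ξ = 0
  · -- trivial case
    have hset : ∀ ξ : ↥D, {r : ℝ | ∃ η : ↥D, n η = 1 ∧ r = ‖Θ ξ η‖} = ∅ := by
      intro ξ
      ext r
      simp only [Set.mem_setOf_eq, Set.mem_empty_iff_false, iff_false, not_exists]
      rintro η ⟨hη, -⟩
      rw [htriv η, (hn.1 0).2 rfl] at hη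
      norm_num at hη
    refine iff_of_true ⟨fun ξ _ => htriv ξ, fun Λ hΛ => ⟨0, fun η => ?_⟩⟩
      ⟨1, one_pos, fun ξ => ?_⟩
    · have hΛ0 : Λ 0 = 0 := by
        have := hΛ.1 0 0
        simpa using this.symm
      rw [htriv η, hΛ0]
      have := hΘzeroL (0 : ↥D)
      simpa [Θ] using this.symm
    · show (1:ℝ) * n ξ ≤ FormSup D Θ n ξ
      rw [FormSup, hset ξ, Real.sSup_empty, htriv ξ, (hn.1 0).2 rfl]
      norm_num
  · -- nontrivial case
    push_neg at htriv
    obtain ⟨ξ₀, hξ₀⟩ := htriv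
    have hn₀ : 0 < n ξ₀ := by
      rcases lt_or_eq_of_le (hnn ξ₀) with h | h
      · exact h
      · exact absurd ((hn.1 ξ₀).1 h.symm) hξ₀
    set η₀ : ↥D := ((n ξ₀ : ℂ))⁻¹ • ξ₀ with hη₀def
    have hη₀1 : n η₀ = 1 := by
      rw [hη₀def, hn.2.1]
      rw [norm_inv, Complex.norm_real, Real.norm_eq_abs, abs_of_pos hn₀,
        inv_mul_cancel₀ hn₀.ne']
    have hsup_nonneg : ∀ ξ : ↥D, 0 ≤ FormSup D Θ n ξ := by
      intro ξ
      have hmem : ‖Θ ξ η₀‖ ∈ {r : ℝ | ∃ η : ↥D, n η = 1 ∧ r = ‖Θ ξ η‖} := ⟨η₀, hη₀1, rfl⟩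
      exact le_trans (norm_nonneg _) (le_csSup (hbdda ξ) hmem)
    have hA_le_sup : ∀ ξ : ↥D, ‖A (e ξ)‖ ≤ FormSup D Θ n ξ := by
      intro ξ
      apply ContinuousLinearMap.opNorm_le_bound _ (hsup_nonneg ξ)
      intro v
      obtain ⟨η, rfl⟩ : ∃ η : ↥D, e η = v := ⟨e.symm v, e.apply_symm_apply v⟩
      rw [hAe, RCLike.norm_conj, he]
      by_cases hη : η = 0
      · rw [hη, hΘzeroR, (hn.1 0).2 rfl]
        simp
      · have hnη : 0 < n η := by
          rcases lt_or_eq_of_le (hnn η) with h | h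
          · exact h
          · exact absurd ((hn.1 η).1 h.symm) hη
        rw [← div_le_iff₀ hnη]
        have hmem : ‖Θ ξ (((n η : ℂ))⁻¹ • η)‖ ∈
            {r : ℝ | ∃ η' : ↥D, n η' = 1 ∧ r = ‖Θ ξ η'‖} := by
          refine ⟨((n η : ℂ))⁻¹ • η, ?_, rfl⟩
          rw [hn.2.1, norm_inv, Complex.norm_real, Real.norm_eq_abs, abs_of_pos hnη,
            inv_mul_cancel₀ hnη.ne']
        have hval : ‖Θ ξ (((n η : ℂ))⁻¹ • η)‖ = ‖Θ ξ η‖ / n η := by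
          rw [hΘsmulR, norm_mul, RCLike.norm_conj, norm_inv, Complex.norm_real,
            Real.norm_eq_abs, abs_of_pos hnη]
          rw [div_eq_inv_mul]
        rw [← hval]
        exact le_csSup (hbdda ξ) hmem
    constructor
    · -- InP0 → lower bound
      rintro ⟨h1, h2⟩
      have hker : ∀ u : M.E, A u = 0 → u = 0 := by
        intro u hu
        obtain ⟨ξ, rfl⟩ : ∃ ξ : ↥D, e ξ = u := ⟨e.symm u, e.apply_symm_apply u⟩
        have hz : ∀ η : ↥D, Θ ξ η = 0 := by
          intro η
          have h3 : A (e ξ) (e η) = 0 := by rw [hu]; rfl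
          rw [hAe] at h3
          have := congrArg (starRingEnd ℂ) h3
          simpa using this
        rw [h1 ξ hz, map_zero]
      have hinj : Function.Injective A := by
        intro a b hab
        have := hker (a - b) (by rw [map_sub, hab, sub_self])
        exact sub_eq_zero.mp this
      have hsurj : Function.Surjective A := by
        intro f
        set Λ : ↥D → ℂ := fun η => (starRingEnd ℂ) (f (e η)) with hΛdef
        have hΛmem : MemConjDual D n Λ := by
          refine ⟨fun x y => by simp [hΛdef, map_add], fun c x => by
            simp [hΛdef, map_smul, map_mul, smul_eq_mul], ⟨‖f‖, fun x => ?_⟩⟩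
          rw [hΛdef]
          simp only [RCLike.norm_conj]
          calc ‖f (e x)‖ ≤ ‖f‖ * ‖e x‖ := f.le_opNorm _
            _ = ‖f‖ * n x := by rw [he]
        obtain ⟨ξ, hξ⟩ := h2 Λ hΛmem
        refine ⟨e ξ, ?_⟩
        ext v
        obtain ⟨η, rfl⟩ : ∃ η : ↥D, e η = v := ⟨e.symm v, e.apply_symm_apply v⟩
        rw [hAe]
        have h4 : Λ η = Θ ξ η := hξ η
        rw [← h4, hΛdef]
        simp
      have hbij : Function.Bijective A := ⟨hinj, hsurj⟩
      rw [ContinuousLinearMap.bijective_iff_dense_range_and_antilipschitz] at hbij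
      obtain ⟨-, c, hc⟩ := hbij
      have hkey : ∀ ξ : ↥D, n ξ ≤ (c : ℝ) * ‖A (e ξ)‖ := by
        intro ξ
        have := hc.le_mul_dist (e ξ) 0
        rw [map_zero] at this
        simpa [dist_zero_right, he] using this
      refine ⟨((c : ℝ) + 1)⁻¹, by positivity, fun ξ => ?_⟩
      have hc1 : (0 : ℝ) < (c : ℝ) + 1 := by positivity
      rw [inv_mul_le_iff₀ hc1]
      calc n ξ ≤ (c : ℝ) * ‖A (e ξ)‖ := hkey ξ
        _ ≤ (c : ℝ) * FormSup D Θ n ξ := by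
            exact mul_le_mul_of_nonneg_left (hA_le_sup ξ) c.coe_nonneg
        _ ≤ ((c : ℝ) + 1) * FormSup D Θ n ξ := by
            have := hsup_nonneg ξ
            nlinarith
    · -- lower bound → InP0
      rintro ⟨c, hcpos, hlow⟩
      refine ⟨fun ξ hz => hnd ξ (hz ξ), ?_⟩
      have hanti : AntilipschitzWith (⟨c, hcpos.le⟩ : NNReal)⁻¹ A := by
        apply AddMonoidHomClass.antilipschitz_of_bound
        intro u
        obtain ⟨ξ, rfl⟩ : ∃ ξ : ↥D, e ξ = u := ⟨e.symm u, e.apply_symm_apply u⟩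
        have h1 : c * n ξ ≤ ‖A (e ξ)‖ := le_trans (hlow ξ) (hsup_le_A ξ)
        have h2 : (((⟨c, hcpos.le⟩ : NNReal)⁻¹ : NNReal) : ℝ) = c⁻¹ := by
          exact NNReal.coe_inv _
        rw [h2, he]
        rw [inv_mul_eq_div, le_div_iff₀ hcpos, mul_comm]
        exact h1
      have hbij : Function.Bijective A := by
        rw [ContinuousLinearMap.bijective_iff_dense_range_and_antilipschitz]
        refine ⟨?_, _, hanti⟩
        rw [ContinuousLinearMap.closed_range_of_antilipschitz hanti]
        apply aux_eq_top_of_dual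
        · have h1 := hanti.isClosed_range A.uniformContinuous
          have h2 : (A.range : Set (M.E →L[ℂ] ℂ)) = Set.range A := by
            ext f; simp [LinearMap.mem_range]
          rw [h2]
          exact h1
        · intro g hg
          obtain ⟨η, hη⟩ := M.reflexive g
          have hgf : ∀ f : StrongDual ℂ M.E, g f = f η := by
            intro f
            rw [← hη]
            rfl
          have h0 : (starRingEnd ℂ) (Θ (e.symm η) (e.symm η)) = 0 := by
            have h3 : g (A η) = 0 := hg (A η) ⟨η, rfl⟩
            rw [hgf (A η)] at h3
            rw [← hA]
            exact h3
          have h4 : Θ (e.symm η) (e.symm η) = 0 := by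
            have := congrArg (starRingEnd ℂ) h0
            simpa using this
          have h5 : e.symm η = 0 := hnd _ h4
          have hη0 : η = 0 := by
            rw [← e.apply_symm_apply η, h5, map_zero]
          ext f
          rw [hgf f, hη0, map_zero]
          rfl
      intro Λ hΛ
      obtain ⟨CΛ, hCΛ⟩ := hΛ.2.2
      let f : M.E →L[ℂ] ℂ :=
        LinearMap.mkContinuous
          { toFun := fun v => (starRingEnd ℂ) (Λ (e.symm v))
            map_add' := fun v w => by
              show (starRingEnd ℂ) (Λ (e.symm (v + w))) =
                (starRingEnd ℂ) (Λ (e.symm v)) + (starRingEnd ℂ) (Λ (e.symm w))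
              rw [map_add e.symm v w, hΛ.1, map_add]
            map_smul' := fun d v => by
              show (starRingEnd ℂ) (Λ (e.symm (d • v))) =
                (RingHom.id ℂ) d • (starRingEnd ℂ) (Λ (e.symm v))
              rw [map_smul e.symm d v, hΛ.2.1, map_mul, Complex.conj_conj]
              simp }
          CΛ
          (fun v => by
            show ‖(starRingEnd ℂ) (Λ (e.symm v))‖ ≤ CΛ * ‖v‖
            rw [RCLike.norm_conj]
            calc ‖Λ (e.symm v)‖ ≤ CΛ * n (e.symm v) := hCΛ _
              _ = CΛ * ‖v‖ := by rw [he'])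
      obtain ⟨u, hu⟩ := hbij.2 f
      refine ⟨e.symm u, fun η => ?_⟩
      have h1 : A u (e η) = f (e η) := by rw [hu]
      have h2 : f (e η) = (starRingEnd ℂ) (Λ η) := by
        show (starRingEnd ℂ) (Λ (e.symm (e η))) = _
        rw [e.symm_apply_apply]
      rw [hA, h2, e.symm_apply_apply] at h1
      have := congrArg (starRingEnd ℂ) h1
      simpa using this.symm

end Paper
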